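/- arXiv:math/0206258 — 2 statements merged into one kernel-verified Lean document; each statement's English description precedes it below -/
import Mathlib

section
/- If Γ is a poly-torsion-free-abelian (PTFA) group, then the set of nonzero elements of the rational group algebra ℚΓ satisfies the right Ore condition: for every a ∈ ℚΓ and every nonzero s ∈ ℚΓ there exist b ∈ ℚΓ and a nonzero t ∈ ℚΓ such that a * t = s * b. -/
open Finset Pointwise

/-- Unique products for finitely generated torsion-free commutative groups. -/
theorem uniqueProds_of_fg_tf {G : Type*} [CommGroup G] [Group.FG G]
    (htf : ∀ x : G, ∀ m : ℤ, 0 < m → x ^ m = 1 → x = 1) : UniqueProds G := by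
  letI M := Additive G
  haveI : AddGroup.FG M := GroupFG.iff_add_fg.mp ‹Group.FG G›
  haveI : Module.Finite ℤ M := Module.Finite.iff_addGroup_fg.mpr ‹_›
  haveI : NoZeroSMulDivisors ℤ M := by
    constructor
    intro m x h
    rcases lt_trichotomy m 0 with hm | hm | hm
    · right
      have : (-m) • x = 0 := by rw [neg_smul, h, neg_zero]
      exact htf (Additive.toMul x) (-m) (by omega) this
    · left; exact hm
    · right; exact htf (Additive.toMul x) m hm h
  haveI : Module.Free ℤ M := Module.free_of_finite_type_torsion_free'
  let b := Module.Free.chooseBasis ℤ M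
  let f : M →+ (Module.Free.ChooseBasisIndex ℤ M → ℤ) :=
    (Finsupp.coeFnAddHom : _ →+ _).comp (b.repr : M ≃ₗ[ℤ] _).toAddMonoidHom
  have hfinj : Function.Injective f := by
    intro x y h
    exact b.repr.injective (DFunLike.coe_injective h)
  haveI : UniqueSums M := UniqueSums.of_injective_addHom f.toAddHom hfinj inferInstance
  haveI : UniqueProds (Multiplicative M) := inferInstance
  exact UniqueProds.of_injective_mulHom
    (⟨fun g => Multiplicative.ofAdd (Additive.ofMul g), fun _ _ => rfl⟩ :
      G →ₙ* Multiplicative M) (fun _ _ h => h) ‹_›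

/-- Unique products for torsion-free commutative groups. -/
theorem uniqueProds_of_comm_tf {G : Type*} [CommGroup G]
    (htf : ∀ x : G, ∀ m : ℤ, 0 < m → x ^ m = 1 → x = 1) : UniqueProds G := by
  classical
  constructor
  intro A B hA hB
  set W := Subgroup.closure ((A ∪ B : Finset G) : Set G) with hW
  have hmem : ∀ x ∈ A ∪ B, x ∈ W := fun x hx => Subgroup.subset_closure hx
  haveI : Group.FG ↥W := Group.closure_finset_fg _
  have hUP : UniqueProds ↥W := uniqueProds_of_fg_tf (fun x m hm hx => by
    have : (x : G) ^ m = 1 := by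
      have := congrArg (Subgroup.subtype W) hx
      simpa using this
    exact Subtype.ext (htf x m hm this))
  let φ : ↥W →ₙ* G := ⟨(↑), fun _ _ => rfl⟩
  let A' : Finset ↥W := A.attach.image fun a => ⟨a.1, hmem a.1 (mem_union_left _ a.2)⟩
  let B' : Finset ↥W := B.attach.image fun b => ⟨b.1, hmem b.1 (mem_union_right _ b.2)⟩
  have hA' : A'.Nonempty := (hA.attach).image _
  have hB' : B'.Nonempty := (hB.attach).image _
  obtain ⟨a0, ha0, b0, hb0, hu⟩ := hUP.uniqueMul_of_nonempty hA' hB'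
  have himA : A'.image φ = A := by
    ext x
    constructor
    · intro hx
      obtain ⟨y, hy, rfl⟩ := Finset.mem_image.mp hx
      obtain ⟨a, -, rfl⟩ := Finset.mem_image.mp hy
      exact a.2
    · intro hx
      exact Finset.mem_image_of_mem _ (Finset.mem_image_of_mem _ (Finset.mem_attach _ ⟨x, hx⟩))
  have himB : B'.image φ = B := by
    ext x
    constructor
    · intro hx
      obtain ⟨y, hy, rfl⟩ := Finset.mem_image.mp hx
      obtain ⟨b, -, rfl⟩ := Finset.mem_image.mp hy
      exact b.2
    · intro hx
      exact Finset.mem_image_of_mem _ (Finset.mem_image_of_mem _ (Finset.mem_attach _ ⟨x, hx⟩))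
  refine ⟨a0, ?_, b0, ?_, ?_⟩
  · rw [← himA]; exact mem_image_of_mem _ ha0
  · rw [← himB]; exact mem_image_of_mem _ hb0
  · have := (UniqueMul.mulHom_image_iff φ Subtype.coe_injective).mpr hu
    rwa [himA, himB] at this

/-- Unique products is closed under group extensions. -/
theorem uniqueProds_extension {G : Type*} [Group G] (N : Subgroup G) [N.Normal]
    (hN : UniqueProds ↥N) (hQ : UniqueProds (G ⧸ N)) : UniqueProds G := by
  classical
  constructor
  intro A B hA hB
  set π := (QuotientGroup.mk' N : G →* G ⧸ N) with hπ
  obtain ⟨qa, hqa, qb, hqb, huQ⟩ := hQ.uniqueMul_of_nonempty (hA.image π) (hB.image π)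
  set A0 : Finset G := {a ∈ A | π a = qa} with hA0
  set B0 : Finset G := {b ∈ B | π b = qb} with hB0
  obtain ⟨a1, ha1⟩ := Finset.mem_image.mp hqa
  obtain ⟨b1, hb1⟩ := Finset.mem_image.mp hqb
  have ha1' : a1 ∈ A0 := Finset.mem_filter.mpr ⟨ha1.1, ha1.2⟩
  have hb1' : b1 ∈ B0 := Finset.mem_filter.mpr ⟨hb1.1, hb1.2⟩
  have hmemN : ∀ x ∈ A0, a1⁻¹ * x ∈ N := by
    intro x hx
    have hx' := (Finset.mem_filter.mp hx).2
    have h1 : π (a1⁻¹ * x) = 1 := by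
      rw [map_mul, map_inv, hx', ha1.2]; simp
    rw [QuotientGroup.mk'_apply] at h1
    exact (QuotientGroup.eq_one_iff _).mp h1
  have hmemN' : ∀ y ∈ B0, y * b1⁻¹ ∈ N := by
    intro y hy
    have hy' := (Finset.mem_filter.mp hy).2
    have h1 : π (y * b1⁻¹) = 1 := by
      rw [map_mul, map_inv, hy', hb1.2]; simp
    rw [QuotientGroup.mk'_apply] at h1
    exact (QuotientGroup.eq_one_iff _).mp h1
  set A2 : Finset ↥N := A0.attach.image (fun x => ⟨a1⁻¹ * x.1, hmemN x.1 x.2⟩) with hA2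
  set B2 : Finset ↥N := B0.attach.image (fun y => ⟨y.1 * b1⁻¹, hmemN' y.1 y.2⟩) with hB2
  have hA2ne : A2.Nonempty := ⟨_, Finset.mem_image_of_mem _ (Finset.mem_attach _ ⟨a1, ha1'⟩)⟩
  have hB2ne : B2.Nonempty := ⟨_, Finset.mem_image_of_mem _ (Finset.mem_attach _ ⟨b1, hb1'⟩)⟩
  obtain ⟨a2, ha2, b2, hb2, huN⟩ := hN.uniqueMul_of_nonempty hA2ne hB2ne
  obtain ⟨xa, -, hxa⟩ := Finset.mem_image.mp ha2
  obtain ⟨yb, -, hyb⟩ := Finset.mem_image.mp hb2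
  have hxa' : a1⁻¹ * (xa : G) = (a2 : G) := congrArg Subtype.val hxa
  have hyb' : (yb : G) * b1⁻¹ = (b2 : G) := congrArg Subtype.val hyb
  set a0 : G := a1 * (a2 : G) with ha0def
  set b0 : G := (b2 : G) * b1 with hb0def
  have ha0A0 : a0 ∈ A0 := by
    rw [ha0def, ← hxa', mul_inv_cancel_left]; exact xa.2
  have hb0B0 : b0 ∈ B0 := by
    rw [hb0def, ← hyb', inv_mul_cancel_right]; exact yb.2
  refine ⟨a0, (Finset.mem_filter.mp ha0A0).1, b0, (Finset.mem_filter.mp hb0B0).1, ?_⟩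
  refine UniqueMul.of_image_filter (π : G →ₙ* G ⧸ N) (aH := qa) (bH := qb) ?_ ?_ huQ ?_
  · exact (Finset.mem_filter.mp ha0A0).2
  · exact (Finset.mem_filter.mp hb0B0).2
  · -- UniqueMul A0 B0 a0 b0
    intro a b ha hb hab
    have haM : a ∈ A0 := ha
    have hbM : b ∈ B0 := hb
    have haN : (⟨a1⁻¹ * a, hmemN a haM⟩ : ↥N) ∈ A2 :=
      Finset.mem_image_of_mem _ (Finset.mem_attach _ ⟨a, haM⟩)
    have hbN : (⟨b * b1⁻¹, hmemN' b hbM⟩ : ↥N) ∈ B2 :=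
      Finset.mem_image_of_mem _ (Finset.mem_attach _ ⟨b, hbM⟩)
    have hprod : (⟨a1⁻¹ * a, hmemN a haM⟩ : ↥N) * ⟨b * b1⁻¹, hmemN' b hbM⟩ = a2 * b2 := by
      apply Subtype.ext
      show a1⁻¹ * a * (b * b1⁻¹) = (a2 : G) * b2
      have hab' : a * b = a1 * ((a2 : G) * ((b2 : G) * b1)) := by
        rw [hab, ha0def, hb0def, mul_assoc]
      calc a1⁻¹ * a * (b * b1⁻¹) = a1⁻¹ * (a * b) * b1⁻¹ := by
            simp [mul_assoc]
        _ = (a2 : G) * b2 := by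
            rw [hab', inv_mul_cancel_left]
            simp [mul_assoc]
    obtain ⟨h1, h2⟩ := huN haN hbN hprod
    have h1' : a1⁻¹ * a = (a2 : G) := congrArg Subtype.val h1
    have h2' : b * b1⁻¹ = (b2 : G) := congrArg Subtype.val h2
    constructor
    · rw [ha0def, ← h1', mul_inv_cancel_left]
    · rw [hb0def, ← h2', inv_mul_cancel_right]

/-- A Følner-type condition: every finite set has a finite set with small product cover. -/
def Foln (G : Type*) [Group G] : Prop :=
  ∀ (S : Finset G) (ε : ℚ), 0 < ε → ∃ T V : Finset G, T.Nonempty ∧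
    (∀ x ∈ S, ∀ y ∈ T, x * y ∈ V) ∧ ((V.card : ℚ) ≤ (1 + ε) * T.card)

theorem foln_of_subsingleton {G : Type*} [Group G] [Subsingleton G] : Foln G := by
  intro S ε hε
  refine ⟨{1}, {1}, ⟨1, mem_singleton_self 1⟩, ?_, ?_⟩
  · intro x hx y hy
    simp [Subsingleton.elim (x * y) 1]
  · simp; nlinarith
theorem foln_of_mulEquiv {G H : Type*} [Group G] [Group H] (e : G ≃* H) (hG : Foln G) :
    Foln H := by
  classical
  intro S ε hε
  obtain ⟨T, V, hTne, hcov, hcard⟩ := hG (S.image e.symm) ε hε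
  refine ⟨T.image e, V.image e, hTne.image e, ?_, ?_⟩
  · intro x hx y hy
    obtain ⟨t, ht, rfl⟩ := Finset.mem_image.mp hy
    have : x * e t = e (e.symm x * t) := by simp
    rw [this]
    exact Finset.mem_image_of_mem _ (hcov _ (Finset.mem_image_of_mem _ hx) t ht)
  · rw [Finset.card_image_of_injective _ e.injective,
      Finset.card_image_of_injective _ e.injective]
    exact hcard

theorem foln_of_comm {G : Type*} [CommGroup G] : Foln G := by
  classical
  intro S ε hε
  by_contra hcon
  push_neg at hcon
  set U : Finset G := insert 1 S with hU
  set k := U.card with hk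
  -- every element of U^n is a product of powers bounded by n
  have claim1 : ∀ n : ℕ, ∀ x ∈ U ^ n, ∃ f : G → ℕ, (∀ g, f g ≤ n) ∧ x = ∏ g ∈ U, g ^ f g := by
    intro n
    induction n with
    | zero =>
      intro x hx
      rw [pow_zero, Finset.mem_one] at hx
      exact ⟨fun _ => 0, fun _ => le_rfl, by simp [hx]⟩
    | succ n ih =>
      intro x hx
      rw [pow_succ, Finset.mem_mul] at hx
      obtain ⟨y, hy, u, hu, rfl⟩ := hx
      obtain ⟨f, hf, hyf⟩ := ih y hy
      refine ⟨fun g => f g + (if g = u then 1 else 0), fun g => by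
        have := hf g; dsimp only; split <;> omega, ?_⟩
      have : ∏ g ∈ U, g ^ (f g + if g = u then 1 else 0)
          = (∏ g ∈ U, g ^ f g) * ∏ g ∈ U, g ^ (if g = u then 1 else 0) := by
        rw [← Finset.prod_mul_distrib]
        exact Finset.prod_congr rfl fun g _ => pow_add g _ _
      rw [this, ← hyf]
      congr 1
      have : ∀ g ∈ U, g ^ (if g = u then 1 else 0) = (if g = u then g else 1) := by
        intro g _; split <;> simp
      rw [Finset.prod_congr rfl this, Finset.prod_ite_eq' U u (fun g => g), if_pos hu]
  -- cardinality bound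
  have claim2 : ∀ n : ℕ, (U ^ n).card ≤ (n + 1) ^ k := by
    intro n
    have hsub : U ^ n ⊆ (Finset.univ : Finset (↥U → Fin (n+1))).image
        (fun f => ∏ g ∈ U.attach, (g : G) ^ (f g : ℕ)) := by
      intro x hx
      obtain ⟨f, hf, rfl⟩ := claim1 n x hx
      refine Finset.mem_image.mpr ⟨fun g => ⟨f g, Nat.lt_succ_of_le (hf g)⟩, Finset.mem_univ _, ?_⟩
      rw [← Finset.prod_attach U (fun g => g ^ f g)]
    calc (U ^ n).card ≤ _ := Finset.card_le_card hsub
      _ ≤ (Finset.univ : Finset (↥U → Fin (n+1))).card := Finset.card_image_le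
      _ = (n + 1) ^ k := by
          simp [Fintype.card_fun, hk]
  -- growth lower bound
  have claim3 : ∀ n : ℕ, ((1 + ε) ^ n : ℚ) ≤ ((U ^ n).card : ℚ) := by
    intro n
    induction n with
    | zero => simp
    | succ n ih =>
      have hUne : U.Nonempty := ⟨1, Finset.mem_insert_self 1 S⟩
      have hne : (U ^ n).Nonempty := hUne.pow
      have hcov : ∀ x ∈ S, ∀ y ∈ U ^ n, x * y ∈ U ^ (n + 1) := by
        intro x hx y hy
        rw [pow_succ']
        exact Finset.mul_mem_mul (Finset.mem_insert_of_mem hx) hy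
      have hlt : (1 + ε) * ((U ^ n).card : ℚ) < ((U ^ (n + 1)).card : ℚ) :=
        hcon (U ^ n) (U ^ (n + 1)) hne hcov
      have : ((1 + ε) ^ (n+1) : ℚ) < ((U ^ (n + 1)).card : ℚ) := by
        calc ((1 + ε) ^ (n+1) : ℚ) = (1 + ε) * (1 + ε) ^ n := by ring
          _ ≤ (1 + ε) * ((U ^ n).card : ℚ) := by nlinarith
          _ < _ := hlt
      exact le_of_lt this
  -- contradiction via exponential growth
  have key : ∀ n : ℕ, ((1 + (ε : ℝ)) ^ n) ≤ ((n : ℝ) + 1) ^ k := by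
    intro n
    have h1 := claim3 n
    have h2 := claim2 n
    have : ((1 + ε) ^ n : ℚ) ≤ ((n + 1) ^ k : ℚ) := by
      calc ((1 + ε) ^ n : ℚ) ≤ ((U ^ n).card : ℚ) := h1
        _ ≤ (((n + 1) ^ k : ℕ) : ℚ) := by exact_mod_cast Nat.cast_le.mpr h2
        _ = ((n + 1) ^ k : ℚ) := by push_cast; ring
    have := (Rat.cast_le (K := ℝ)).mpr this
    push_cast at this ⊢
    convert this using 2 <;> norm_num
  have hr : (1 : ℝ) < 1 + (ε : ℝ) := by
    have : (0 : ℝ) < (ε : ℝ) := by exact_mod_cast hε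
    linarith
  have htend := tendsto_pow_const_div_const_pow_of_one_lt k hr
  have htend' : Filter.Tendsto (fun n : ℕ => ((n + 1 : ℕ) : ℝ) ^ k / (1 + (ε : ℝ)) ^ (n + 1))
      Filter.atTop (nhds 0) := htend.comp (Filter.tendsto_add_atTop_nat 1)
  have hev := htend'.eventually (gt_mem_nhds (show (0:ℝ) < 1 / (1 + (ε:ℝ)) by positivity))
  obtain ⟨n, hn⟩ := hev.exists
  have hb : (0:ℝ) < 1 + (ε:ℝ) := by linarith
  have hpow : (0:ℝ) < (1 + (ε:ℝ)) ^ (n+1) := by positivity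
  have h4 := (div_lt_div_iff₀ hpow hb).mp hn
  rw [one_mul, pow_succ] at h4
  have h2 : ((n + 1 : ℕ) : ℝ) ^ k < (1 + (ε:ℝ)) ^ n :=
    lt_of_mul_lt_mul_right h4 (le_of_lt hb)
  have h5 := key n
  push_cast at h2
  linarith

theorem foln_extension {G : Type*} [Group G] (N : Subgroup G) [N.Normal]
    (hN : Foln ↥N) (hQ : Foln (G ⧸ N)) : Foln G := by
  classical
  intro S ε hε
  set ε' : ℚ := min ε 1 / 3 with hε'def
  have hε' : 0 < ε' := by
    rw [hε'def]
    have : 0 < min ε 1 := lt_min hε one_pos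
    linarith
  have hε'le : (1 + ε') * (1 + ε') ≤ 1 + ε := by
    have h1 : ε' ≤ ε / 3 := by
      rw [hε'def]; have := min_le_left ε 1; linarith
    have h2 : ε' ≤ 1 / 3 := by
      rw [hε'def]; have := min_le_right ε 1; linarith
    nlinarith
  set π : G →* G ⧸ N := QuotientGroup.mk' N with hπ
  obtain ⟨TQ, VQ, hTQne, hcovQ, hcardQ⟩ := hQ (S.image π) ε' hε'
  -- a section of π
  set σ : G ⧸ N → G := Quotient.out with hσ
  have hπσ : ∀ q : G ⧸ N, π (σ q) = q := fun q => QuotientGroup.out_eq' q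
  have hσinj : Function.Injective σ := fun q q' h => by
    rw [← hπσ q, ← hπσ q', h]
  set L : Finset G := TQ.image σ with hL
  -- error terms
  have hν : ∀ s l : G, (σ (π (s * l)))⁻¹ * (s * l) ∈ N := by
    intro s l
    have : π ((σ (π (s * l)))⁻¹ * (s * l)) = 1 := by
      rw [map_mul, map_inv, hπσ, map_mul]; group
    rw [hπ, QuotientGroup.mk'_apply] at this
    exact (QuotientGroup.eq_one_iff _).mp this
  set SN : Finset ↥N :=
    (S ×ˢ L).attach.image (fun p => (⟨_, hν p.1.1 p.1.2⟩ : ↥N)) with hSN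
  obtain ⟨TN, VN, hTNne, hcovN, hcardN⟩ := hN SN ε' hε'
  set TN' : Finset G := TN.image ((↑) : ↥N → G) with hTN'
  refine ⟨L * TN', (VQ.image σ) * (VN.image ((↑) : ↥N → G)), ?_, ?_, ?_⟩
  · exact (hTQne.image σ).mul (hTNne.image _)
  · -- covering
    intro x hx y hy
    rw [Finset.mem_mul] at hy
    obtain ⟨l, hl, t, ht, rfl⟩ := hy
    obtain ⟨tn, htn, rfl⟩ := Finset.mem_image.mp ht
    have hkey : x * ((l : G) * tn) = σ (π (x * l)) * (((⟨_, hν x l⟩ : ↥N) : G) * tn) := by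
      simp only []
      group
    rw [hkey]
    apply Finset.mul_mem_mul
    · apply Finset.mem_image_of_mem
      have : π (x * l) = π x * π l := map_mul _ _ _
      rw [this]
      obtain ⟨q, hq, rfl⟩ := Finset.mem_image.mp hl
      rw [hπσ q]
      exact hcovQ (π x) (Finset.mem_image_of_mem _ hx) q hq
    · have hmem : (⟨_, hν x l⟩ : ↥N) ∈ SN := by
        rw [hSN]
        exact Finset.mem_image_of_mem _
          (Finset.mem_attach _ ⟨(x, l), Finset.mem_product.mpr ⟨hx, hl⟩⟩)
      have hco : ((⟨_, hν x l⟩ : ↥N) : G) * (tn : G)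
          = (((⟨_, hν x l⟩ : ↥N) * tn : ↥N) : G) := rfl
      rw [hco]
      exact Finset.mem_image_of_mem _ (hcovN _ hmem tn htn)
  · -- cardinalities
    clear_value ε' π σ L SN TN'
    subst hL
    subst hTN'
    have hLcard : (TQ.image σ).card = TQ.card := Finset.card_image_of_injective _ hσinj
    have hTN'card : (TN.image ((↑) : ↥N → G)).card = TN.card := Finset.card_image_of_injective _ Subtype.coe_injective
    have hTcard : (TQ.image σ * TN.image ((↑) : ↥N → G)).card = TQ.card * TN.card := by
      rw [← hLcard, ← hTN'card]
      rw [Finset.card_mul_iff.mpr ?_]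
      rintro ⟨x1, y1⟩ hxy1 ⟨x2, y2⟩ hxy2 h
      simp only [Set.mem_prod, Finset.mem_coe] at hxy1 hxy2
      obtain ⟨hx1, hy1⟩ := hxy1
      obtain ⟨hx2, hy2⟩ := hxy2
      -- x1 * y1 = x2 * y2 with xi ∈ L, yi ∈ TN'
      obtain ⟨n1, hn1, rfl⟩ := Finset.mem_image.mp hy1
      obtain ⟨n2, hn2, rfl⟩ := Finset.mem_image.mp hy2
      obtain ⟨q1, hq1, rfl⟩ := Finset.mem_image.mp hx1
      obtain ⟨q2, hq2, rfl⟩ := Finset.mem_image.mp hx2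
      simp only at h
      have hπ1 : π (σ q1 * (n1 : G)) = q1 := by
        rw [map_mul, hπσ]
        have : π (n1 : G) = 1 := by
          rw [hπ, QuotientGroup.mk'_apply, QuotientGroup.eq_one_iff]; exact n1.2
        rw [this, mul_one]
      have hπ2 : π (σ q2 * (n2 : G)) = q2 := by
        rw [map_mul, hπσ]
        have : π (n2 : G) = 1 := by
          rw [hπ, QuotientGroup.mk'_apply, QuotientGroup.eq_one_iff]; exact n2.2
        rw [this, mul_one]
      have hq : q1 = q2 := by rw [← hπ1, ← hπ2, h]
      subst hq
      have : (n1 : G) = n2 := by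
        have := mul_left_cancel h
        exact this
      simp [this]
    have hVnat : (VQ.image σ * VN.image ((↑) : ↥N → G)).card ≤ VQ.card * VN.card := by
      calc (VQ.image σ * VN.image ((↑) : ↥N → G)).card
          ≤ (VQ.image σ).card * (VN.image ((↑) : ↥N → G)).card := Finset.card_mul_le
        _ ≤ VQ.card * VN.card := Nat.mul_le_mul Finset.card_image_le Finset.card_image_le
    rw [hTcard]
    have h0 : ((VQ.image σ * VN.image ((↑) : ↥N → G)).card : ℚ)
        ≤ (VQ.card : ℚ) * VN.card := by exact_mod_cast hVnat
    have hq1 : (0:ℚ) ≤ (TQ.card:ℚ) := Nat.cast_nonneg _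
    have hq2 : (0:ℚ) ≤ (TN.card:ℚ) := Nat.cast_nonneg _
    have hq3 : (0:ℚ) ≤ (VN.card:ℚ) := Nat.cast_nonneg _
    have hcast : ((TQ.card * TN.card : ℕ) : ℚ) = (TQ.card:ℚ) * TN.card := by
      push_cast; ring
    rw [hcast]
    have hp : (0:ℚ) ≤ (1+ε')*(TQ.card:ℚ) := by positivity
    have step : (VQ.card:ℚ) * VN.card ≤ ((1+ε')*TQ.card) * ((1+ε')*TN.card) :=
      le_trans (mul_le_mul_of_nonneg_right hcardQ hq3)
        (mul_le_mul_of_nonneg_left hcardN hp)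
    have step2 : ((1+ε')*TQ.card) * ((1+ε')*TN.card) ≤ (1+ε) * ((TQ.card:ℚ)*TN.card) := by
      have hre : ((1+ε')*TQ.card) * ((1+ε')*TN.card)
          = ((1+ε')*(1+ε')) * ((TQ.card:ℚ)*TN.card) := by ring
      rw [hre]
      exact mul_le_mul_of_nonneg_right hε'le (by positivity)
    linarith [h0, step, step2]

open scoped commutatorElement

/-- A group `Γ` is poly-torsion-free-abelian (PTFA) if it admits a finite chain of subgroups
`⊥ = H n ≤ … ≤ H 0 = Γ`, each normal in `Γ`, such that each factor `H i / H (i+1)` is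
torsion-free abelian. -/
def IsPTFA (Γ : Type*) [Group Γ] : Prop :=
  ∃ (n : ℕ) (H : ℕ → Subgroup Γ),
    H 0 = ⊤ ∧ H n = ⊥ ∧
    (∀ i < n, H (i + 1) ≤ H i) ∧
    (∀ i ≤ n, (H i).Normal) ∧
    (∀ i < n, ∀ x ∈ H i, ∀ y ∈ H i, ⁅x, y⁆ ∈ H (i + 1)) ∧
    (∀ i < n, ∀ x ∈ H i, ∀ m : ℤ, 0 < m → x ^ m ∈ H (i + 1) → x ∈ H (i + 1))

theorem uniqueProds_of_subsingleton {G : Type*} [Group G] [Subsingleton G] : UniqueProds G := by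
  constructor
  intro A B hA hB
  refine ⟨hA.choose, hA.choose_spec, hB.choose, hB.choose_spec, ?_⟩
  intro a b _ _ _
  exact ⟨Subsingleton.elim _ _, Subsingleton.elim _ _⟩

theorem up_and_foln_of_isPTFA {Γ : Type*} [Group Γ] (hΓ : IsPTFA Γ) :
    UniqueProds Γ ∧ Foln Γ := by
  obtain ⟨n, H, h0, hn, hle, hnorm, hcomm, htf⟩ := hΓ
  have key : ∀ k, k ≤ n → UniqueProds ↥(H (n - k)) ∧ Foln ↥(H (n - k)) := by
    intro k
    induction k with
    | zero =>
      intro _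
      rw [Nat.sub_zero, hn]
      exact ⟨uniqueProds_of_subsingleton, foln_of_subsingleton⟩
    | succ k ih =>
      intro hk
      obtain ⟨hup, hfo⟩ := ih (by omega)
      set i := n - (k + 1) with hidef
      have hi : i < n := by omega
      have hi1 : n - k = i + 1 := by omega
      rw [hi1] at hup hfo
      haveI hN1 : (H (i + 1)).Normal := hnorm (i + 1) (by omega)
      set K : Subgroup ↥(H i) := (H (i + 1)).subgroupOf (H i) with hK
      haveI : K.Normal := hN1.subgroupOf (H i)
      have e : K ≃* ↥(H (i + 1)) := Subgroup.subgroupOfEquivOfLe (hle i hi)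
      have hupK : UniqueProds ↥K := (MulEquiv.uniqueProds_iff e).mpr hup
      have hfoK : Foln ↥K := foln_of_mulEquiv e.symm hfo
      have hQcomm : ∀ x y : ↥(H i) ⧸ K, x * y = y * x := by
        intro x y
        refine QuotientGroup.induction_on x ?_
        intro b
        refine QuotientGroup.induction_on y ?_
        intro a
        show ((b * a : ↥(H i)) : ↥(H i) ⧸ K) = ((a * b : ↥(H i)) : ↥(H i) ⧸ K)
        rw [QuotientGroup.eq]
        rw [Subgroup.mem_subgroupOf]
        have hmem := hcomm i hi ((a : Γ))⁻¹ (inv_mem a.2) ((b : Γ))⁻¹ (inv_mem b.2)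
        have hco : (((b * a)⁻¹ * (a * b) : ↥(H i)) : Γ) = ⁅((a : Γ))⁻¹, ((b : Γ))⁻¹⁆ := by
          push_cast
          rw [commutatorElement_def]
          group
        rw [hco]
        exact hmem
      have hQtf : ∀ x : ↥(H i) ⧸ K, ∀ m : ℤ, 0 < m → x ^ m = 1 → x = 1 := by
        intro x m hm hx
        refine QuotientGroup.induction_on x (fun a hxa => ?_) hx
        have h1 : ((a ^ m : ↥(H i)) : ↥(H i) ⧸ K) = 1 := by
          rw [← hxa]
          push_cast
          rfl
        have h2 : (a ^ m : ↥(H i)) ∈ K := (QuotientGroup.eq_one_iff _).mp h1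
        rw [Subgroup.mem_subgroupOf] at h2
        have h3 : ((a : Γ)) ^ m ∈ H (i + 1) := by
          have : ((a ^ m : ↥(H i)) : Γ) = ((a : Γ)) ^ m := by push_cast; rfl
          rwa [this] at h2
        have h4 : (a : Γ) ∈ H (i + 1) := htf i hi (a : Γ) a.2 m hm h3
        rw [QuotientGroup.eq_one_iff, Subgroup.mem_subgroupOf]
        exact h4
      letI : CommGroup (↥(H i) ⧸ K) :=
        { (inferInstance : Group (↥(H i) ⧸ K)) with mul_comm := hQcomm }
      have hupQ : UniqueProds (↥(H i) ⧸ K) := uniqueProds_of_comm_tf hQtf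
      have hfoQ : Foln (↥(H i) ⧸ K) := foln_of_comm
      exact ⟨uniqueProds_extension K hupK hupQ, foln_extension K hfoK hfoQ⟩
  obtain ⟨hup, hfo⟩ := key n le_rfl
  rw [Nat.sub_self, h0] at hup hfo
  exact ⟨(MulEquiv.uniqueProds_iff Subgroup.topEquiv).mp hup,
    foln_of_mulEquiv Subgroup.topEquiv hfo⟩

/-- If `Γ` is PTFA then the nonzero elements of the rational group algebra `ℚΓ` satisfy the
right Ore condition: for every `a` and every nonzero `s` there are `b` and a nonzero `t` with
`a * t = s * b`. -/
theorem rightOre_monoidAlgebra_rat_of_isPTFA (Γ : Type*) [Group Γ] (hΓ : IsPTFA Γ) :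
    ∀ (a s : MonoidAlgebra ℚ Γ), s ≠ 0 →
      ∃ (b t : MonoidAlgebra ℚ Γ), t ≠ 0 ∧ a * t = s * b := by
  classical
  obtain ⟨hUP, hFo⟩ := up_and_foln_of_isPTFA hΓ
  haveI := hUP
  intro a s hs
  set S : Finset Γ := a.coeff.support ∪ s.coeff.support with hS
  obtain ⟨T, V, hTne, hcov, hcard⟩ := hFo S (1/2) (by norm_num)
  -- the linear embedding of coefficient vectors
  let e : (↥T → ℚ) →ₗ[ℚ] MonoidAlgebra ℚ Γ :=
    { toFun := fun τ => ∑ t : ↥T, τ t • MonoidAlgebra.single (t : Γ) (1 : ℚ)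
      map_add' := by
        intro τ1 τ2
        simp [add_smul, Finset.sum_add_distrib]
      map_smul' := by
        intro c τ
        simp [smul_smul, Finset.smul_sum] }
  have he : ∀ (τ : ↥T → ℚ) (g : Γ) (hg : g ∈ T), (e τ).coeff g = τ ⟨g, hg⟩ := by
    intro τ g hg
    show (∑ t : ↥T, τ t • MonoidAlgebra.single (t : Γ) (1 : ℚ)).coeff g = τ ⟨g, hg⟩
    rw [MonoidAlgebra.coeff_sum, Finsupp.finset_sum_apply]
    have : ∀ t : ↥T, (τ t • MonoidAlgebra.single (t : Γ) (1 : ℚ)).coeff g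
        = if t = ⟨g, hg⟩ then τ t else 0 := by
      intro t
      rw [MonoidAlgebra.coeff_smul, Finsupp.smul_apply, MonoidAlgebra.coeff_single, Finsupp.single_apply]
      by_cases h : t = ⟨g, hg⟩
      · have : (t : Γ) = g := by rw [h]
        simp [h, this]
      · have : (t : Γ) ≠ g := fun hc => h (Subtype.ext hc)
        simp [h, this]
    rw [Finset.sum_congr rfl (fun t _ => this t), Finset.sum_ite_eq' Finset.univ ⟨g, hg⟩ τ]
    simp
  have hesupp : ∀ τ : ↥T → ℚ, (e τ).coeff.support ⊆ T := by
    intro τ g hg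
    by_contra hgT
    have : (e τ).coeff g = 0 := by
      show (∑ t : ↥T, τ t • MonoidAlgebra.single (t : Γ) (1 : ℚ)).coeff g = 0
      rw [MonoidAlgebra.coeff_sum, Finsupp.finset_sum_apply]
      apply Finset.sum_eq_zero
      intro t _
      rw [MonoidAlgebra.coeff_smul, Finsupp.smul_apply, MonoidAlgebra.coeff_single, Finsupp.single_apply]
      have : (t : Γ) ≠ g := fun hc => hgT (hc ▸ t.2)
      simp [this]
    exact (Finsupp.mem_support_iff.mp hg) this
  have heinj : ∀ τ : ↥T → ℚ, e τ = 0 → τ = 0 := by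
    intro τ hτ
    funext t
    have := he τ (t : Γ) t.2
    rw [hτ] at this
    simpa using this.symm
  -- the comparison linear map
  let F : ((↥T → ℚ) × (↥T → ℚ)) →ₗ[ℚ] MonoidAlgebra ℚ Γ :=
    (LinearMap.mulLeft ℚ a) ∘ₗ e ∘ₗ LinearMap.snd ℚ _ _
      - (LinearMap.mulLeft ℚ s) ∘ₗ e ∘ₗ LinearMap.fst ℚ _ _
  let Φ : ((↥T → ℚ) × (↥T → ℚ)) →ₗ[ℚ] (↥V → ℚ) :=
    LinearMap.pi (fun x => (Finsupp.lapply (x : Γ)) ∘ₗ (MonoidAlgebra.coeffLinearEquiv ℚ).toLinearMap ∘ₗ F)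
  have hΦ : ¬ Function.Injective Φ := by
    intro hinj
    have h1 := LinearMap.finrank_le_finrank_of_injective hinj
    have h2 : Module.finrank ℚ ((↥T → ℚ) × (↥T → ℚ)) = T.card + T.card := by
      simp [Module.finrank_prod]
    have h3 : Module.finrank ℚ (↥V → ℚ) = V.card := by
      simp
    rw [h2, h3] at h1
    -- but V.card < 2 * T.card
    have hT1 : 1 ≤ (T.card : ℚ) := by
      have := hTne.card_pos
      exact_mod_cast this
    have : (V.card : ℚ) < 2 * T.card := by
      calc (V.card : ℚ) ≤ (1 + 1/2) * T.card := hcard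
        _ < 2 * T.card := by nlinarith
    have : (V.card : ℚ) < (T.card : ℚ) + T.card := by linarith
    have hVT : V.card < T.card + T.card := by exact_mod_cast this
    omega
  rw [Function.not_injective_iff] at hΦ
  obtain ⟨p, q, hpq, hne⟩ := hΦ
  set d := p - q with hd
  have hd0 : d ≠ 0 := sub_ne_zero_of_ne hne
  have hΦd : Φ d = 0 := by
    rw [hd, map_sub, hpq, sub_self]
  -- the difference element vanishes
  have hFd : F d = 0 := by
    have hcoeff : ∀ x : ↥V, (F d).coeff (x : Γ) = 0 := fun x => congrFun hΦd x
    have hsupp : (F d).coeff.support ⊆ V := by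
      have h1 : F d = a * e d.2 - s * e d.1 := rfl
      rw [h1, MonoidAlgebra.coeff_sub]
      refine subset_trans (Finsupp.support_sub) ?_
      apply Finset.union_subset
      · refine subset_trans (MonoidAlgebra.support_coeff_mul_subset a (e d.2)) ?_
        intro z hz
        rw [Finset.mem_mul] at hz
        obtain ⟨u, hu, v, hv, rfl⟩ := hz
        exact hcov u (Finset.mem_union_left _ hu) v (hesupp _ hv)
      · refine subset_trans (MonoidAlgebra.support_coeff_mul_subset s (e d.1)) ?_
        intro z hz
        rw [Finset.mem_mul] at hz
        obtain ⟨u, hu, v, hv, rfl⟩ := hz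
        exact hcov u (Finset.mem_union_right _ hu) v (hesupp _ hv)
    ext g
    by_cases hgV : g ∈ V
    · exact hcoeff ⟨g, hgV⟩
    · exact Finsupp.notMem_support_iff.mp (fun hc => hgV (hsupp hc))
  have hmain : a * e d.2 = s * e d.1 := by
    have h1 : F d = a * e d.2 - s * e d.1 := rfl
    rw [h1] at hFd
    exact sub_eq_zero.mp hFd
  have ht2 : d.2 ≠ 0 := by
    intro h2
    have : e d.2 = 0 := by rw [h2, map_zero]
    rw [this, mul_zero] at hmain
    have : e d.1 = 0 := by
      rcases mul_eq_zero.mp hmain.symm with h | h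
      · exact absurd h hs
      · exact h
    have h1 : d.1 = 0 := heinj _ this
    exact hd0 (Prod.ext h1 h2)
  refine ⟨e d.1, e d.2, ?_, hmain⟩
  intro hc
  exact ht2 (heinj _ hc)
end

section
/- If Γ is a poly-torsion-free-abelian (PTFA) group, then the rational group algebra ℚΓ has only trivial units: every unit of MonoidAlgebra ℚ Γ is of the form q • (single γ 1) for some nonzero rational number q and some γ ∈ Γ, i.e. a nonzero scalar multiple of a group element. -/
open Finset

open scoped commutatorElement

/-- A torsion-free (as `ℤ`-module) commutative group has unique sums: reduce to finitely
generated subgroups, which are free over `ℤ`, hence embed in `ι →₀ ℤ`. -/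
theorem UniqueSums.of_noZeroSMulDivisors_int (M : Type*) [AddCommGroup M]
    [NoZeroSMulDivisors ℤ M] : UniqueSums M := by
  constructor
  intro A B hA hB
  classical
  set S : Submodule ℤ M := Submodule.span ℤ ((A : Set M) ∪ (B : Set M)) with hS
  have hAS : ∀ a ∈ A, a ∈ S := fun a ha =>
    Submodule.subset_span (Set.mem_union_left _ ha)
  have hBS : ∀ b ∈ B, b ∈ S := fun b hb =>
    Submodule.subset_span (Set.mem_union_right _ hb)
  haveI : Module.Finite ℤ S := Module.Finite.span_of_finite ℤ
    (Set.Finite.union A.finite_toSet B.finite_toSet)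
  haveI : Module.Free ℤ S := inferInstance
  have hus : UniqueSums S := by
    let b := Module.Free.chooseBasis ℤ S
    exact UniqueSums.of_injective_addHom b.repr.toAddMonoidHom.toAddHom
      b.repr.injective inferInstance
  let A' : Finset S := A.subtype (· ∈ S)
  let B' : Finset S := B.subtype (· ∈ S)
  have hA' : A'.Nonempty := by
    obtain ⟨a, ha⟩ := hA
    exact ⟨⟨a, hAS a ha⟩, by simp [A', ha]⟩
  have hB' : B'.Nonempty := by
    obtain ⟨b, hb⟩ := hB
    exact ⟨⟨b, hBS b hb⟩, by simp [B', hb]⟩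
  obtain ⟨a0, ha0, b0, hb0, hu⟩ := hus.uniqueAdd_of_nonempty hA' hB'
  have hmapA : A'.map (Function.Embedding.subtype _) = A := by
    rw [Finset.subtype_map, Finset.filter_true_of_mem hAS]
  have hmapB : B'.map (Function.Embedding.subtype _) = B := by
    rw [Finset.subtype_map, Finset.filter_true_of_mem hBS]
  refine ⟨a0, ?_, b0, ?_, ?_⟩
  · rw [← hmapA]; exact Finset.mem_map_of_mem _ ha0
  · rw [← hmapB]; exact Finset.mem_map_of_mem _ hb0
  · have := (UniqueAdd.addHom_map_iff (G := S) (H := M)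
      (Function.Embedding.subtype _) (fun x y => rfl)).mpr hu
    rwa [hmapA, hmapB] at this

/-- A commutative torsion-free group has unique products. -/
theorem UniqueProds.of_comm_torsionFree {G : Type*} [Group G]
    (hc : ∀ x y : G, x * y = y * x)
    (ht : ∀ (x : G) (m : ℤ), 0 < m → x ^ m = 1 → x = 1) :
    UniqueProds G := by
  letI : CommGroup G := { (inferInstance : Group G) with mul_comm := hc }
  haveI : NoZeroSMulDivisors ℤ (Additive G) := by
    constructor
    intro m x h
    by_contra hmx
    push_neg at hmx
    obtain ⟨hm, hx⟩ := hmx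
    have hpow : (Additive.toMul x) ^ m = 1 := h
    rcases lt_trichotomy m 0 with hm' | hm' | hm'
    · have hpow' : (Additive.toMul x) ^ (-m) = 1 := by
        rw [zpow_neg, hpow, inv_one]
      exact hx (ht _ (-m) (by omega) hpow')
    · exact hm hm'
    · exact hx (ht _ m hm' hpow)
  haveI := UniqueSums.of_noZeroSMulDivisors_int (Additive G)
  exact ⟨fun hA hB => UniqueSums.uniqueAdd_of_nonempty (G := Additive G) hA hB⟩

theorem UniqueProds.of_subsingleton' {G : Type*} [Mul G] [Subsingleton G] :
    UniqueProds G :=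
  ⟨fun hA hB =>
    ⟨hA.choose, hA.choose_spec, hB.choose, hB.choose_spec, UniqueMul.of_subsingleton⟩⟩

/-- `UniqueProds` is closed under group extensions. -/
theorem UniqueProds.of_normal {G : Type*} [Group G] (N : Subgroup G) [hN : N.Normal]
    (h1 : UniqueProds N) (h2 : UniqueProds (G ⧸ N)) : UniqueProds G := by
  constructor
  intro A B hA hB
  classical
  let f : G →* G ⧸ N := QuotientGroup.mk' N
  obtain ⟨qa, hqa, qb, hqb, hq⟩ :=
    h2.uniqueMul_of_nonempty (hA.image f) (hB.image f)
  obtain ⟨a, ha, rfl⟩ := Finset.mem_image.mp hqa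
  obtain ⟨b, hb, rfl⟩ := Finset.mem_image.mp hqb
  set A' : Finset G := A.filter (fun x => f x = f a) with hA'def
  set B' : Finset G := B.filter (fun x => f x = f b) with hB'def
  have φa_inj : Function.Injective (fun n : N => a * b * (n : G) * b⁻¹) := by
    intro m n h
    simp only at h
    ext
    exact mul_left_cancel (mul_right_cancel h)
  have φb_inj : Function.Injective (fun n : N => b * (n : G)) := by
    intro m n h
    simp only at h
    ext
    exact mul_left_cancel h
  set A'' : Finset N := A'.preimage _ (φa_inj.injOn) with hA''def
  set B'' : Finset N := B'.preimage _ (φb_inj.injOn) with hB''def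
  have hA'' : A''.Nonempty := by
    refine ⟨1, Finset.mem_preimage.mpr ?_⟩
    simp only [OneMemClass.coe_one, mul_one]
    rw [mul_inv_cancel_right]
    exact Finset.mem_filter.mpr ⟨ha, rfl⟩
  have hB'' : B''.Nonempty := by
    refine ⟨1, Finset.mem_preimage.mpr ?_⟩
    simp only [OneMemClass.coe_one, mul_one]
    exact Finset.mem_filter.mpr ⟨hb, rfl⟩
  obtain ⟨n1, hn1, n2, hn2, hu⟩ := h1.uniqueMul_of_nonempty hA'' hB''
  rw [hA''def, Finset.mem_preimage] at hn1
  rw [hB''def, Finset.mem_preimage] at hn2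
  set a0 : G := a * b * (n1 : G) * b⁻¹ with ha0def
  set b0 : G := b * (n2 : G) with hb0def
  have hfa0 : f a0 = f a := by
    have h1' : f (n1 : G) = 1 := (QuotientGroup.eq_one_iff _).mpr n1.2
    simp [ha0def, map_mul, h1', mul_assoc]
  have hfb0 : f b0 = f b := by
    have h2' : f (n2 : G) = 1 := (QuotientGroup.eq_one_iff _).mpr n2.2
    simp [hb0def, map_mul, h2']
  have huG : UniqueMul A' B' a0 b0 := by
    intro x y hx hy hxy
    rw [hA'def, Finset.mem_filter] at hx
    rw [hB'def, Finset.mem_filter] at hy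
    have hxN : a⁻¹ * x ∈ N := QuotientGroup.eq.mp hx.2.symm
    have hyN : b⁻¹ * y ∈ N := QuotientGroup.eq.mp hy.2.symm
    have hm1mem : b⁻¹ * (a⁻¹ * x) * b ∈ N := by
      have := hN.conj_mem _ hxN b⁻¹
      rwa [inv_inv] at this
    set m1 : N := ⟨b⁻¹ * (a⁻¹ * x) * b, hm1mem⟩ with hm1def
    set m2 : N := ⟨b⁻¹ * y, hyN⟩ with hm2def
    have hφm1 : a * b * (m1 : G) * b⁻¹ = x := by
      simp only [hm1def]; group
    have hφm2 : b * (m2 : G) = y := by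
      simp only [hm2def]; group
    have hm1A : m1 ∈ A'' := by
      rw [hA''def, Finset.mem_preimage]
      simp only [hφm1]
      exact Finset.mem_filter.mpr hx
    have hm2B : m2 ∈ B'' := by
      rw [hB''def, Finset.mem_preimage]
      simp only [hφm2]
      exact Finset.mem_filter.mpr hy
    have key : m1 * m2 = n1 * n2 := by
      have e1 : a * b * ((m1 : G) * (m2 : G)) = x * y := by
        rw [← hφm1, ← hφm2]; group
      have e2 : a * b * ((n1 : G) * (n2 : G)) = a0 * b0 := by
        rw [ha0def, hb0def]; group
      ext
      push_cast
      exact mul_left_cancel (by rw [e1, e2, hxy])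
    obtain ⟨hm1, hm2⟩ := hu hm1A hm2B key
    constructor
    · rw [← hφm1, hm1]
    · rw [← hφm2, hm2]
  have ha0A' : a0 ∈ A' := by
    rw [hA'def] at hn1 ⊢; exact hn1
  have hb0B' : b0 ∈ B' := by
    rw [hB'def] at hn2 ⊢; exact hn2
  refine ⟨a0, (Finset.mem_filter.mp ha0A').1, b0, (Finset.mem_filter.mp hb0B').1, ?_⟩
  exact UniqueMul.of_image_filter (H := G ⧸ N) f.toMulHom hfa0 hfb0 hq huG

/-- A PTFA group has unique products. -/
theorem uniqueProds_of_isPTFA {Γ : Type*} [Group Γ] (hΓ : IsPTFA Γ) : UniqueProds Γ := by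
  obtain ⟨n, H, h0, hn, hle, hnorm, hcomm, htf⟩ := hΓ
  have key : ∀ j : ℕ, UniqueProds (H (n - j)) := by
    intro j
    induction j with
    | zero =>
      haveI : Subsingleton (H (n - 0)) := by
        rw [Nat.sub_zero, hn]
        infer_instance
      exact UniqueProds.of_subsingleton'
    | succ j ih =>
      by_cases hj : j < n
      · have hi : n - (j + 1) < n := by omega
        have hsucc : n - (j + 1) + 1 = n - j := by omega
        set i := n - (j + 1) with hidef
        haveI : (H (i + 1)).Normal := hnorm (i + 1) (by omega)
        haveI hNnorm : ((H (i + 1)).subgroupOf (H i)).Normal := inferInstance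
        have hup1 : UniqueProds ((H (i + 1)).subgroupOf (H i)) := by
          have e := Subgroup.subgroupOfEquivOfLe (hle i hi)
          refine UniqueProds.of_injective_mulHom e.toMonoidHom.toMulHom e.injective ?_
          rw [hsucc]
          exact ih
        have hup2 : UniqueProds (↥(H i) ⧸ (H (i + 1)).subgroupOf (H i)) := by
          apply UniqueProds.of_comm_torsionFree
          · intro x y
            obtain ⟨a, rfl⟩ := QuotientGroup.mk_surjective x
            obtain ⟨b, rfl⟩ := QuotientGroup.mk_surjective y
            rw [← QuotientGroup.mk_mul, ← QuotientGroup.mk_mul, QuotientGroup.eq]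
            rw [Subgroup.mem_subgroupOf]
            have hmem : ⁅((b : Γ))⁻¹, ((a : Γ))⁻¹⁆ ∈ H (i + 1) :=
              hcomm i hi _ (inv_mem b.2) _ (inv_mem a.2)
            have : (((a * b)⁻¹ * (b * a) : H i) : Γ) = ⁅((b : Γ))⁻¹, ((a : Γ))⁻¹⁆ := by
              push_cast
              group
            rwa [this]
          · intro x m hm hxm
            obtain ⟨a, rfl⟩ := QuotientGroup.mk_surjective x
            rw [← QuotientGroup.mk_zpow, QuotientGroup.eq_one_iff,
              Subgroup.mem_subgroupOf] at hxm
            rw [QuotientGroup.eq_one_iff, Subgroup.mem_subgroupOf]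
            have : ((a ^ m : H i) : Γ) = (a : Γ) ^ m := by push_cast; rfl
            rw [this] at hxm
            exact htf i hi _ a.2 m hm hxm
        exact UniqueProds.of_normal _ hup1 hup2
      · have heq : n - (j + 1) = n - j := by omega
        rw [heq]
        exact ih
  have htop : UniqueProds (H 0) := by
    have := key n
    rwa [Nat.sub_self] at this
  rw [h0] at htop
  exact UniqueProds.of_injective_mulHom
    (Subgroup.topEquiv (G := Γ)).symm.toMonoidHom.toMulHom
    (Subgroup.topEquiv (G := Γ)).symm.injective htop

/-- If `Γ` is PTFA then `ℚΓ` has only trivial units: every unit is a nonzero rational multiple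
of a group element. -/
theorem units_monoidAlgebra_rat_trivial_of_isPTFA (Γ : Type*) [Group Γ] (hΓ : IsPTFA Γ)
    (u : (MonoidAlgebra ℚ Γ)ˣ) :
    ∃ (q : ℚ) (γ : Γ), q ≠ 0 ∧
      (u : MonoidAlgebra ℚ Γ) = q • MonoidAlgebra.single γ (1 : ℚ) := by
  classical
  haveI : UniqueProds Γ := uniqueProds_of_isPTFA hΓ
  haveI : TwoUniqueProds Γ := UniqueProds.toTwoUniqueProds_of_group
  set w : MonoidAlgebra ℚ Γ := (u : MonoidAlgebra ℚ Γ) with hw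
  set v : MonoidAlgebra ℚ Γ := ((u⁻¹ : (MonoidAlgebra ℚ Γ)ˣ) : MonoidAlgebra ℚ Γ) with hv
  have hmul : w * v = 1 := u.mul_inv
  have hw0 : w ≠ 0 := Units.ne_zero u
  have hv0 : v ≠ 0 := Units.ne_zero u⁻¹
  have hA : w.coeff.support.Nonempty := Finsupp.support_nonempty_iff.mpr (fun h => hw0 (MonoidAlgebra.coeff_eq_zero.mp h))
  have hB : v.coeff.support.Nonempty := Finsupp.support_nonempty_iff.mpr (fun h => hv0 (MonoidAlgebra.coeff_eq_zero.mp h))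
  have hcard : ¬ 1 < #(w.coeff.support) * #(v.coeff.support) := by
    intro hc
    obtain ⟨p1, hp1, p2, hp2, hne, hu1, hu2⟩ := TwoUniqueProds.uniqueMul_of_one_lt_card hc
    rw [Finset.mem_product] at hp1 hp2
    have h1 : (w * v).coeff (p1.1 * p1.2) ≠ 0 := by
      rw [MonoidAlgebra.coeff_mul_mul_of_uniqueMul hu1]
      exact mul_ne_zero (Finsupp.mem_support_iff.mp hp1.1) (Finsupp.mem_support_iff.mp hp1.2)
    have h2 : (w * v).coeff (p2.1 * p2.2) ≠ 0 := by
      rw [MonoidAlgebra.coeff_mul_mul_of_uniqueMul hu2]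
      exact mul_ne_zero (Finsupp.mem_support_iff.mp hp2.1) (Finsupp.mem_support_iff.mp hp2.2)
    rw [hmul] at h1 h2
    have e1 : p1.1 * p1.2 = 1 := by
      by_contra h
      exact h1 (by rw [MonoidAlgebra.one_def, MonoidAlgebra.coeff_single]; exact Finsupp.single_eq_of_ne' (Ne.symm h))
    have e2 : p2.1 * p2.2 = 1 := by
      by_contra h
      exact h2 (by rw [MonoidAlgebra.one_def, MonoidAlgebra.coeff_single]; exact Finsupp.single_eq_of_ne' (Ne.symm h))
    apply hne
    have := hu1 hp2.1 hp2.2 (by rw [e2, e1])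
    exact (Prod.ext this.1 this.2).symm
  have hAcard : #(w.coeff.support) = 1 := by
    have h1 := Finset.card_pos.mpr hA
    have h2 := Finset.card_pos.mpr hB
    have hle1 : #(w.coeff.support) * #(v.coeff.support) ≤ 1 := Nat.not_lt.mp hcard
    have hle2 : #(w.coeff.support) ≤ #(w.coeff.support) * #(v.coeff.support) :=
      Nat.le_mul_of_pos_right _ h2
    omega
  obtain ⟨γ, q, hq, hval⟩ := Finsupp.card_support_eq_one'.mp hAcard
  refine ⟨q, γ, hq, ?_⟩
  apply MonoidAlgebra.ext
  rw [hval, MonoidAlgebra.coeff_smul, MonoidAlgebra.coeff_single, Finsupp.smul_single, smul_eq_mul, mul_one]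
end
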